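/- For the Lie algebra g₄(α,β), the scalar curvature is the constant −(1+α)²/2 − 2β² − 6, which is strictly negative for all real α,β. -/

import Mathlib

open Real

abbrev V4 := Fin 4 → ℝ

/-- the inner product making the basis orthonormal -/
def ip (u v : V4) : ℝ := u 0 * v 0 + u 1 * v 1 + u 2 * v 2 + u 3 * v 3

def X : V4 := ![1, 0, 0, 0]
def Y : V4 := ![0, 1, 0, 0]
def Z : V4 := ![0, 0, 1, 0]
def W : V4 := ![0, 0, 0, 1]

def e : Fin 4 → V4 := ![X, Y, Z, W]

def br (α β : ℝ) (u v : V4) : V4 := (u 0 * v 2 - u 2 * v 0) • X + (u 0 * v 3 - u 3 * v 0) • Y + (u 1 * v 2 - u 2 * v 1) • Y + (u 1 * v 3 - u 3 * v 1) • (α • X + β • Y)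

noncomputable def N (α β : ℝ) (u v : V4) : V4 :=
  fun i => (ip (br α β u v) (e i) - ip (br α β v (e i)) u + ip (br α β (e i) u) v) / 2

set_option maxHeartbeats 4000000 in
theorem stmt10 (α β : ℝ) (nabla : V4 → V4 → V4)
    (hK : ∀ u v w : V4, 2 * ip (nabla u v) w = ip (br α β u v) w - ip (br α β v w) u + ip (br α β w u) v)
    (R : V4 → V4 → V4 → V4)
    (hR : ∀ u v w : V4, R u v w = nabla u (nabla v w) - nabla v (nabla u w) - nabla (br α β u v) w) :
    (∑ j : Fin 4, ∑ k : Fin 4, if j ≠ k then ip (R (e k) (e j) (e j)) (e k) / (ip (e j) (e j) * ip (e k) (e k) - ip (e j) (e k) ^ 2) else 0) = -((1 + α) ^ 2)/2 - 2 * β ^ 2 - 6 ∧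
    -((1 + α) ^ 2)/2 - 2 * β ^ 2 - 6 < 0 := by
  have hnab : ∀ u v : V4, nabla u v = N α β u v := by
    intro u v
    funext i
    have h := hK u v (e i)
    have hip : ip (nabla u v) (e i) = nabla u v i := by
      fin_cases i <;> simp [ip, e, X, Y, Z, W, Matrix.vecHead, Matrix.vecTail]
    rw [hip] at h
    simp only [N]
    linarith
  constructor
  · simp only [hR, hnab, Fin.sum_univ_four]
    norm_num [N, ip, e, br, X, Y, Z, W, Matrix.vecHead, Matrix.vecTail, Matrix.cons_val_zero, Matrix.cons_val_one, Matrix.cons_val_two, Matrix.cons_val_three]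
    norm_num [Fin.ext_iff, show ((3:Fin 4):ℕ) = 3 from rfl]
    ring
  · nlinarith [sq_nonneg (1 + α), sq_nonneg β]
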